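/- The functional J attains its minimum over Y at a unique point: there exists ṽ ∈ Y such that J(ṽ) ≤ J(v) for all v ∈ Y, and any two global minimizers of J coincide. -/

import Mathlib

open RealInnerProductSpace ContinuousLinearMap Filter

private lemma Jconv_sq {a b c t s : ℝ} (ha : 0 ≤ a) (hb : 0 ≤ b) (hc : 0 ≤ c)
    (ht : 0 ≤ t) (hs : 0 ≤ s) (hts : t + s = 1) (h : c ≤ t * a + s * b) :
    c ^ 2 ≤ t * a ^ 2 + s * b ^ 2 := by
  nlinarith [sq_nonneg (a - b), mul_nonneg ht hs, mul_le_mul h h hc (by positivity)]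

private lemma Jconv_comb {a b c nu nv nz iu iv e t s : ℝ}
    (hsq : c ^ 2 ≤ t * a ^ 2 + s * b ^ 2)
    (hez : e * nz ≤ t * (e * nu) + s * (e * nv)) :
    1/2 * c ^ 2 + e * nz - (t * iu + s * iv) ≤
      t * (1/2 * a ^ 2 + e * nu - iu) + s * (1/2 * b ^ 2 + e * nv - iv) := by
  nlinarith

private lemma Juniq_sq {a b q w nu nv iu iv e enz : ℝ}
    (henz : enz ≤ e * (1/2 * nu) + e * (1/2 * nv))
    (heq : 1/2 * a ^ 2 + e * nu - iu = 1/2 * b ^ 2 + e * nv - iv)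
    (hle : 1/2 * a ^ 2 + e * nu - iu ≤ 1/2 * (1/2 * q) ^ 2 + enz - (1/2 * iu + 1/2 * iv))
    (hpar : q ^ 2 + w ^ 2 = 2 * (a ^ 2 + b ^ 2)) : w ^ 2 ≤ 0 := by
  nlinarith

set_option maxHeartbeats 1000000 in
/-- The functional J(v) = (1/2)‖L*v‖² + ε‖v‖ − ⟨f, v⟩ attains its minimum over Y
at a unique point. -/
theorem J_has_unique_minimizer
    {X Y : Type*} [NormedAddCommGroup X] [InnerProductSpace ℝ X] [CompleteSpace X]
    [NormedAddCommGroup Y] [InnerProductSpace ℝ Y] [CompleteSpace Y]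
    (L : X →L[ℝ] Y) (hinj : Function.Injective (adjoint L))
    (f : Y) (ε : ℝ) (hε : 0 < ε)
    (J : Y → ℝ)
    (hJ : J = fun v => (1/2) * ‖adjoint L v‖^2 + ε * ‖v‖ - ⟪f, v⟫) :
    ∃! vt : Y, ∀ v : Y, J vt ≤ J v := by
  set A := adjoint L with hA
  -- J is continuous
  have hJcont : Continuous J := by
    rw [hJ]
    have h1 : Continuous fun v : Y => ‖A v‖ := A.continuous.norm
    have h2 : Continuous fun v : Y => ⟪f, v⟫ := continuous_const.inner continuous_id
    exact ((continuous_const.mul (h1.pow 2)).add (continuous_const.mul continuous_norm)).sub h2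
  -- dense range of L
  have hdense : (LinearMap.range L.toLinearMap).topologicalClosure = ⊤ := by
    rw [Submodule.topologicalClosure_eq_top_iff, Submodule.eq_bot_iff]
    intro y hy
    apply hinj
    rw [map_zero]
    have hz : ∀ x : X, ⟪A y, x⟫ = 0 := by
      intro x
      have h := hy (L x) (LinearMap.mem_range_self _ x)
      rw [hA, adjoint_inner_left]
      rw [real_inner_comm] at h
      exact h
    have h := hz (A y)
    rwa [real_inner_self_eq_norm_sq, pow_eq_zero_iff (by norm_num), norm_eq_zero] at h
  -- f is approximated by L x within ε
  obtain ⟨x, hx⟩ : ∃ x : X, ‖f - L x‖ < ε := by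
    have hf : f ∈ closure ((LinearMap.range L.toLinearMap : Submodule ℝ Y) : Set Y) := by
      rw [← Submodule.topologicalClosure_coe, hdense]
      exact Submodule.mem_top
    obtain ⟨b, hb, hd⟩ := Metric.mem_closure_iff.1 hf ε hε
    obtain ⟨x, rfl⟩ := hb
    exact ⟨x, by rwa [← dist_eq_norm]⟩
  set r := f - L x with hr
  have hδpos : 0 < ε - ‖r‖ := by linarith
  -- Coercivity: J v ≥ (ε - ‖r‖)‖v‖ - ‖x‖²/2
  have hcoer : ∀ v : Y, (ε - ‖r‖) * ‖v‖ - ‖x‖^2 / 2 ≤ J v := by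
    intro v
    have hfa : ⟪f, v⟫ = ⟪A v, x⟫ + ⟪r, v⟫ := by
      have hfe : f = L x + r := by rw [hr]; abel
      rw [hfe, inner_add_left, hA, adjoint_inner_left, real_inner_comm v (L x)]
    have h1 : ⟪A v, x⟫ ≤ ‖A v‖ * ‖x‖ := real_inner_le_norm _ _
    have h2 : ⟪r, v⟫ ≤ ‖r‖ * ‖v‖ := real_inner_le_norm _ _
    rw [hJ]
    simp only
    rw [hfa]
    nlinarith [sq_nonneg (‖A v‖ - ‖x‖), norm_nonneg v]
  -- J is bounded below
  have hbdd : BddBelow (Set.range J) := by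
    refine ⟨-(‖x‖^2 / 2), ?_⟩
    rintro _ ⟨v, rfl⟩
    have h := hcoer v
    have h2 : 0 ≤ (ε - ‖r‖) * ‖v‖ := mul_nonneg hδpos.le (norm_nonneg v)
    linarith
  set m := ⨅ v : Y, J v with hm
  have hmle : ∀ v : Y, m ≤ J v := fun v => ciInf_le hbdd v
  -- Convexity inequality for J
  have hconv : ∀ (u v : Y) (t s : ℝ), 0 ≤ t → 0 ≤ s → t + s = 1 →
      J (t • u + s • v) ≤ t * J u + s * J v := by
    intro u v t s ht hs hts
    have hnA : ‖A (t • u + s • v)‖ ≤ t * ‖A u‖ + s * ‖A v‖ := by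
      rw [map_add, map_smul, map_smul]
      refine (norm_add_le _ _).trans ?_
      rw [norm_smul, norm_smul, Real.norm_eq_abs, Real.norm_eq_abs, abs_of_nonneg ht,
        abs_of_nonneg hs]
    have hn : ‖t • u + s • v‖ ≤ t * ‖u‖ + s * ‖v‖ := by
      refine (norm_add_le _ _).trans ?_
      rw [norm_smul, norm_smul, Real.norm_eq_abs, Real.norm_eq_abs, abs_of_nonneg ht,
        abs_of_nonneg hs]
    have hi : ⟪f, t • u + s • v⟫ = t * ⟪f, u⟫ + s * ⟪f, v⟫ := by
      rw [inner_add_right, real_inner_smul_right, real_inner_smul_right]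
    have hsq : ‖A (t • u + s • v)‖ ^ 2 ≤ t * ‖A u‖ ^ 2 + s * ‖A v‖ ^ 2 :=
      Jconv_sq (norm_nonneg _) (norm_nonneg _) (norm_nonneg _) ht hs hts hnA
    have hez : ε * ‖t • u + s • v‖ ≤ t * (ε * ‖u‖) + s * (ε * ‖v‖) := by
      have := mul_le_mul_of_nonneg_left hn hε.le
      nlinarith
    rw [hJ]
    simp only
    rw [hi]
    exact Jconv_comb hsq hez
  -- sublevel sets
  set C : ℕ → Set Y := fun n => {v | J v ≤ m + 1 / (n + 1)} with hC
  have hCne : ∀ n, (C n).Nonempty := by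
    intro n
    have h : (⨅ v : Y, J v) < m + 1 / (n + 1) := by
      have h0 : (0:ℝ) < 1 / (n + 1) := by positivity
      have : (⨅ v : Y, J v) = m := rfl
      linarith
    obtain ⟨v, hv⟩ := exists_lt_of_ciInf_lt h
    exact ⟨v, hv.le⟩
  have hCclosed : ∀ n, IsClosed (C n) := fun n => isClosed_le hJcont continuous_const
  have hCconvex : ∀ n, Convex ℝ (C n) := by
    intro n u hu v hv t s ht hs hts
    have h := hconv u v t s ht hs hts
    have hu' : J u ≤ m + 1 / (n+1) := hu
    have hv' : J v ≤ m + 1 / (n+1) := hv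
    have h2 : J (t • u + s • v) ≤ t * (m + 1/(n+1)) + s * (m + 1/(n+1)) :=
      h.trans (add_le_add (mul_le_mul_of_nonneg_left hu' ht)
        (mul_le_mul_of_nonneg_left hv' hs))
    have h3 : t * (m + 1/(n+1)) + s * (m + 1/(n+1)) = m + 1/(n+1) := by
      rw [← add_mul, hts, one_mul]
    show J (t • u + s • v) ≤ m + 1/(n+1)
    rw [← h3]; exact h2
  have hCsub : ∀ {n k : ℕ}, n ≤ k → C k ⊆ C n := by
    intro n k hnk v hv
    have hv' : J v ≤ m + 1 / (k + 1) := hv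
    show J v ≤ m + 1 / (n + 1)
    refine le_trans hv' ?_
    have h : (1:ℝ) / (k + 1) ≤ 1 / (n + 1) := by
      apply one_div_le_one_div_of_le (by positivity)
      have : (n:ℝ) ≤ k := by exact_mod_cast hnk
      linarith
    linarith
  -- minimal norm elements
  have hP : ∀ n, ∃ v, v ∈ C n ∧ ∀ w ∈ C n, ‖v‖ ≤ ‖w‖ := by
    intro n
    obtain ⟨v, hv, hmin⟩ := exists_norm_eq_iInf_of_complete_convex (hCne n)
      ((hCclosed n).isComplete) (hCconvex n) (0 : Y)
    refine ⟨v, hv, fun w hw => ?_⟩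
    have hbd : BddBelow (Set.range fun w : C n => ‖(0:Y) - w‖) :=
      ⟨0, by rintro _ ⟨w, rfl⟩; exact norm_nonneg _⟩
    have h := ciInf_le hbd (⟨w, hw⟩ : C n)
    rw [← hmin] at h
    simpa using h
  choose p hpC hpmin using hP
  -- uniform bound
  have hBp : ∀ n, ‖p n‖ ≤ (m + 1 + ‖x‖^2/2) / (ε - ‖r‖) := by
    intro n
    have h1 : J (p n) ≤ m + 1 := by
      have hc := hpC n
      have h2 : (1:ℝ) / (n + 1) ≤ 1 := by
        rw [div_le_one (by positivity)]
        have : (0:ℝ) ≤ n := Nat.cast_nonneg n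
        linarith
      exact le_trans hc (by linarith)
    have h3 := hcoer (p n)
    rw [le_div_iff₀ hδpos]
    nlinarith
  set d : ℕ → ℝ := fun n => ‖p n‖^2 with hd
  have hdmono : Monotone d := by
    intro n k hnk
    have h : ‖p n‖ ≤ ‖p k‖ := hpmin n (p k) (hCsub hnk (hpC k))
    exact pow_le_pow_left₀ (norm_nonneg _) h 2
  have hdbdd : BddAbove (Set.range d) := by
    refine ⟨((m + 1 + ‖x‖^2/2) / (ε - ‖r‖))^2, ?_⟩
    rintro _ ⟨n, rfl⟩
    exact pow_le_pow_left₀ (norm_nonneg _) (hBp n) 2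
  have hdcauchy : CauchySeq d := (tendsto_atTop_ciSup hdmono hdbdd).cauchySeq
  -- key estimate
  have hkey : ∀ {n k : ℕ}, n ≤ k → ‖p n - p k‖^2 ≤ 2 * (d k - d n) := by
    intro n k hnk
    have hz : (1/2 : ℝ) • p n + (1/2 : ℝ) • p k ∈ C n :=
      hCconvex n (hpC n) (hCsub hnk (hpC k)) (by norm_num) (by norm_num) (by norm_num)
    have h1 : ‖p n‖ ≤ ‖(1/2 : ℝ) • p n + (1/2 : ℝ) • p k‖ := hpmin n _ hz
    have h2 : ‖(1/2 : ℝ) • p n + (1/2 : ℝ) • p k‖ = (1/2) * ‖p n + p k‖ := by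
      rw [← smul_add, norm_smul, Real.norm_eq_abs]
      norm_num
    have h3 := parallelogram_law_with_norm ℝ (p n) (p k)
    rw [h2] at h1
    have h4 : 0 ≤ ‖p n‖ := norm_nonneg _
    have h5 : d n = ‖p n‖^2 := rfl
    have h6 : d k = ‖p k‖^2 := rfl
    rw [h5, h6]
    nlinarith [norm_nonneg (p n + p k)]
  -- p is Cauchy
  have hpcauchy : CauchySeq p := by
    rw [Metric.cauchySeq_iff]
    intro e he
    obtain ⟨N, hN⟩ := Metric.cauchySeq_iff.1 hdcauchy (e^2 / 2) (by positivity)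
    refine ⟨N, fun a ha b hb => ?_⟩
    rw [dist_eq_norm]
    rcases le_total a b with hab | hab
    · have hk := hkey hab
      have hdab := hN b hb a ha
      rw [Real.dist_eq] at hdab
      have habs : d b - d a ≤ |d b - d a| := le_abs_self _
      nlinarith [norm_nonneg (p a - p b)]
    · have hk := hkey hab
      have hdab := hN a ha b hb
      rw [Real.dist_eq] at hdab
      have habs : d a - d b ≤ |d a - d b| := le_abs_self _
      have hneg : ‖p a - p b‖ = ‖p b - p a‖ := by rw [← norm_neg, neg_sub]
      rw [hneg]
      nlinarith [norm_nonneg (p b - p a)]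
  obtain ⟨vt, hvt⟩ := cauchySeq_tendsto_of_complete hpcauchy
  -- vt lies in every C n
  have hvtC : ∀ n, vt ∈ C n := by
    intro n
    refine (hCclosed n).mem_of_tendsto hvt ?_
    exact eventually_atTop.2 ⟨n, fun k hk => hCsub hk (hpC k)⟩
  have hvtm : J vt ≤ m := by
    have hlim : Tendsto (fun n : ℕ => m + 1 / (n + 1)) atTop (nhds m) := by
      have h := tendsto_one_div_add_atTop_nhds_zero_nat (𝕜 := ℝ)
      simpa using tendsto_const_nhds.add h
    exact ge_of_tendsto hlim (Eventually.of_forall fun n => hvtC n)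
  have hvtmin : ∀ v : Y, J vt ≤ J v := fun v => hvtm.trans (hmle v)
  refine ⟨vt, hvtmin, ?_⟩
  -- uniqueness
  intro u hu
  have h1 : J u = J vt := le_antisymm (hu vt) (hvtmin u)
  have h2 : J u ≤ J ((1/2 : ℝ) • u + (1/2 : ℝ) • vt) := hu _
  have hAeq : A u = A vt := by
    have hzn : ε * ‖(1/2 : ℝ) • u + (1/2 : ℝ) • vt‖ ≤ ε * (1/2 * ‖u‖) + ε * (1/2 * ‖vt‖) := by
      have hn : ‖(1/2 : ℝ) • u + (1/2 : ℝ) • vt‖ ≤ 1/2 * ‖u‖ + 1/2 * ‖vt‖ := by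
        refine (norm_add_le _ _).trans ?_
        rw [norm_smul, norm_smul, Real.norm_eq_abs]
        have habs : |(1/2 : ℝ)| = 1/2 := by norm_num
        rw [habs]
      nlinarith
    have hAz : ‖A ((1/2 : ℝ) • u + (1/2 : ℝ) • vt)‖ = 1/2 * ‖A u + A vt‖ := by
      rw [map_add, map_smul, map_smul, ← smul_add, norm_smul, Real.norm_eq_abs]
      norm_num
    have hiz : ⟪f, (1/2 : ℝ) • u + (1/2 : ℝ) • vt⟫ = 1/2 * ⟪f, u⟫ + 1/2 * ⟪f, vt⟫ := by
      rw [inner_add_right, real_inner_smul_right, real_inner_smul_right]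
    rw [hJ] at h2 h1
    simp only at h2 h1
    rw [hAz, hiz] at h2
    have hpar : ‖A u + A vt‖^2 + ‖A u - A vt‖^2 = 2 * (‖A u‖^2 + ‖A vt‖^2) := by
      simpa only [← pow_two] using parallelogram_law_with_norm ℝ (A u) (A vt)
    have hw : ‖A u - A vt‖^2 ≤ 0 := Juniq_sq hzn h1 h2 hpar
    have hw0 : ‖A u - A vt‖ = 0 := by nlinarith [norm_nonneg (A u - A vt)]
    rwa [norm_eq_zero, sub_eq_zero] at hw0
  exact hinj hAeq
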